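/- Let A be a normal disjunctive bounded distributive lattice. Then the map a ↦ a^♯ = {M ∈ S(A) : a ∈ M} is a lattice isomorphism from A onto its image, a meet-dense sublattice of the lattice of closed sets of the maximal spectrum S(A). -/
import Mathlib


/-- `F` is a (lattice) filter: contains `⊤`, is upward closed, and closed under meets. -/
def IsLatticeFilter {A : Type*} [Lattice A] [BoundedOrder A] (F : Set A) : Prop :=
  ⊤ ∈ F ∧ (∀ a b : A, a ∈ F → a ≤ b → b ∈ F) ∧ (∀ a b : A, a ∈ F → b ∈ F → a ⊓ b ∈ F)

/-- `F` is a maximal proper filter. -/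
def IsMaximalFilter {A : Type*} [Lattice A] [BoundedOrder A] (F : Set A) : Prop :=
  IsLatticeFilter F ∧ (⊥ : A) ∉ F ∧
    ∀ G : Set A, IsLatticeFilter G → (⊥ : A) ∉ G → F ⊆ G → G = F

/-- The maximal spectrum of `A`: the set of maximal proper filters of `A`. -/
def MaxSpectrum (A : Type*) [Lattice A] [BoundedOrder A] : Type _ :=
  {M : Set A // IsMaximalFilter M}

/-- The basic closed set `a^♯ = {M ∈ S(A) : a ∈ M}`. -/
def sharp {A : Type*} [Lattice A] [BoundedOrder A] (a : A) : Set (MaxSpectrum A) :=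
  {M : MaxSpectrum A | a ∈ M.1}

/-- The topology on the maximal spectrum, with the sets `a^♯` as a base for the
closed sets. -/
def spectrumTopology (A : Type*) [Lattice A] [BoundedOrder A] :
    TopologicalSpace (MaxSpectrum A) :=
  TopologicalSpace.generateFrom {s | ∃ a : A, s = (sharp a)ᶜ}

section Aux
variable {A : Type*} [Lattice A] [BoundedOrder A]

lemma exists_maximal_ext {F : Set A} (hF : IsLatticeFilter F) (hb : (⊥:A) ∉ F) :
    ∃ M : Set A, IsMaximalFilter M ∧ F ⊆ M := by
  obtain ⟨m, hFm, hm⟩ := zorn_subset_nonempty {G : Set A | IsLatticeFilter G ∧ (⊥:A) ∉ G}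
    (fun c hcS hc hne => by
      refine ⟨⋃₀ c, ⟨⟨?_, ?_, ?_⟩, ?_⟩, fun s hs => Set.subset_sUnion_of_mem hs⟩
      · obtain ⟨G, hG⟩ := hne
        exact ⟨G, hG, (hcS hG).1.1⟩
      · rintro a b ⟨G, hG, haG⟩ hab
        exact ⟨G, hG, (hcS hG).1.2.1 a b haG hab⟩
      · rintro a b ⟨G, hG, haG⟩ ⟨H, hH, hbH⟩
        rcases hc.total hG hH with h | h
        · exact ⟨H, hH, (hcS hH).1.2.2 a b (h haG) hbH⟩
        · exact ⟨G, hG, (hcS hG).1.2.2 a b haG (h hbH)⟩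
      · rintro ⟨G, hG, hbG⟩
        exact (hcS hG).2 hbG)
    F ⟨hF, hb⟩
  refine ⟨m, ⟨hm.1.1, hm.1.2, fun G hG hbG hmG => ?_⟩, hFm⟩
  exact (hm.eq_of_le ⟨hG, hbG⟩ hmG).symm

lemma mem_or_compl {M : Set A} (hM : IsMaximalFilter M) {a : A} (ha : a ∉ M) :
    ∃ m ∈ M, m ⊓ a = ⊥ := by
  by_contra h
  push_neg at h
  set G : Set A := {x | ∃ m ∈ M, m ⊓ a ≤ x} with hGdef
  have hGF : IsLatticeFilter G := by
    refine ⟨⟨⊤, hM.1.1, le_top⟩, ?_, ?_⟩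
    · rintro x y ⟨m, hm, hmx⟩ hxy; exact ⟨m, hm, hmx.trans hxy⟩
    · rintro x y ⟨m, hm, hmx⟩ ⟨n, hn, hny⟩
      exact ⟨m ⊓ n, hM.1.2.2 m n hm hn,
        le_inf ((inf_le_inf_right a inf_le_left).trans hmx)
               ((inf_le_inf_right a inf_le_right).trans hny)⟩
  have hGb : (⊥:A) ∉ G := by
    rintro ⟨m, hm, hmb⟩
    exact h m hm (le_bot_iff.mp hmb)
  have hMG : M ⊆ G := fun x hx => ⟨x, hx, inf_le_left⟩
  have : G = M := hM.2.2 G hGF hGb hMG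
  exact ha (this ▸ ⟨⊤, hM.1.1, by simp⟩)
end Aux

section Aux2
variable {A : Type*} [DistribLattice A] [BoundedOrder A]

lemma filter_prime {M : Set A} (hM : IsMaximalFilter M) {a b : A}
    (hab : a ⊔ b ∈ M) : a ∈ M ∨ b ∈ M := by
  by_contra h
  push_neg at h
  obtain ⟨m, hm, hma⟩ := mem_or_compl hM h.1
  obtain ⟨n, hn, hnb⟩ := mem_or_compl hM h.2
  have hmn : m ⊓ n ∈ M := hM.1.2.2 m n hm hn
  have : (m ⊓ n) ⊓ (a ⊔ b) = ⊥ := by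
    rw [inf_sup_left]
    have h1 : m ⊓ n ⊓ a = ⊥ := le_bot_iff.mp (by
      calc m ⊓ n ⊓ a ≤ m ⊓ a := inf_le_inf_right a inf_le_left
      _ = ⊥ := hma)
    have h2 : m ⊓ n ⊓ b = ⊥ := le_bot_iff.mp (by
      calc m ⊓ n ⊓ b ≤ n ⊓ b := inf_le_inf_right b inf_le_right
      _ = ⊥ := hnb)
    rw [h1, h2, sup_idem]
  exact hM.2.1 (this ▸ hM.1.2.2 _ _ hmn hab)
end Aux2

/-- For a normal disjunctive bounded distributive lattice `A`, the map `a ↦ a^♯` is a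
lattice isomorphism of `A` onto its image, a meet-dense sublattice of the lattice of
closed sets of `S(A)`. -/
theorem sharp_lattice_embedding_meet_dense {A : Type*} [DistribLattice A] [BoundedOrder A]
    (hnorm : ∀ a b : A, a ⊓ b = ⊥ →
      ∃ a' b' : A, a ⊓ a' = ⊥ ∧ b ⊓ b' = ⊥ ∧ a' ⊔ b' = ⊤)
    (hdisj : ∀ a b : A, a ≠ b → ∃ c : A, c ≠ ⊥ ∧
      ((c ≤ a ∧ c ⊓ b = ⊥) ∨ (c ≤ b ∧ c ⊓ a = ⊥))) :
    Function.Injective (sharp (A := A)) ∧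
      (∀ a b : A, sharp (a ⊓ b) = sharp a ∩ sharp b) ∧
      (∀ a b : A, sharp (a ⊔ b) = sharp a ∪ sharp b) ∧
      sharp (⊥ : A) = (∅ : Set (MaxSpectrum A)) ∧
      sharp (⊤ : A) = (Set.univ : Set (MaxSpectrum A)) ∧
      (∀ a : A, @IsClosed _ (spectrumTopology A) (sharp a)) ∧
      (∀ C : Set (MaxSpectrum A), @IsClosed _ (spectrumTopology A) C →
        ∃ S : Set A, C = ⋂ a ∈ S, sharp a) := by

  have sharp_sup : ∀ a b : A, sharp (a ⊔ b) = sharp a ∪ sharp b := by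
    intro a b
    ext M
    constructor
    · intro h
      exact (filter_prime M.2 h).imp id id
    · rintro (h | h)
      · exact M.2.1.2.1 a (a ⊔ b) h le_sup_left
      · exact M.2.1.2.1 b (a ⊔ b) h le_sup_right
  have sharp_bot : sharp (⊥:A) = (∅ : Set (MaxSpectrum A)) := by
    ext M; simp [sharp, M.2.2.1]
  refine ⟨?_, ?_, sharp_sup, sharp_bot, ?_, ?_, ?_⟩
  · -- injectivity
    intro a b hab
    by_contra hne
    obtain ⟨c, hc, hcase⟩ := hdisj a b hne
    have key : ∀ x y : A, c ≤ x → c ⊓ y = ⊥ → sharp x ≠ sharp y := by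
      intro x y hcx hcy heq
      obtain ⟨M, hM, hFM⟩ := exists_maximal_ext (F := Set.Ici c)
        ⟨le_top, fun p q hp hpq => hp.trans hpq, fun p q hp hq => le_inf hp hq⟩
        (by simpa [le_bot_iff] using hc)
      have hxM : (⟨M, hM⟩ : MaxSpectrum A) ∈ sharp x :=
        hFM (show c ≤ x from hcx)
      have hyM : (⟨M, hM⟩ : MaxSpectrum A) ∈ sharp y := heq ▸ hxM
      exact hM.2.1 (hcy ▸ hM.1.2.2 c y (hFM le_rfl) hyM)
    rcases hcase with ⟨h1, h2⟩ | ⟨h1, h2⟩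
    · exact key a b h1 h2 hab
    · exact key b a h1 h2 hab.symm
  · intro a b
    ext M
    constructor
    · intro h
      exact ⟨M.2.1.2.1 _ a h inf_le_left, M.2.1.2.1 _ b h inf_le_right⟩
    · rintro ⟨h1, h2⟩
      exact M.2.1.2.2 a b h1 h2
  · ext M; simp [sharp, M.2.1.1]
  · intro a
    exact @IsClosed.mk _ (spectrumTopology A) _
      (TopologicalSpace.GenerateOpen.basic _ ⟨a, rfl⟩)
  · intro C hC
    refine ⟨{a | C ⊆ sharp a}, ?_⟩
    apply Set.Subset.antisymm
    · intro M hM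
      simp only [Set.mem_iInter]
      intro a ha
      exact ha hM
    · intro M hM
      by_contra hMC
      have hopen : TopologicalSpace.GenerateOpen {s | ∃ a : A, s = (sharp a)ᶜ} Cᶜ :=
        hC.isOpen_compl
      have key : ∀ U, TopologicalSpace.GenerateOpen {s | ∃ a : A, s = (sharp a)ᶜ} U →
          ∀ x, x ∈ U → ∃ a : A, x ∈ (sharp a)ᶜ ∧ (sharp a)ᶜ ⊆ U := by
        intro U hU
        induction hU with
        | basic s hs =>
          obtain ⟨a, rfl⟩ := hs
          exact fun x hx => ⟨a, hx, subset_rfl⟩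
        | univ =>
          intro x _
          refine ⟨⊥, ?_, fun _ _ => trivial⟩
          simp [sharp_bot]
        | inter U V hU hV ihU ihV =>
          rintro x ⟨hxU, hxV⟩
          obtain ⟨a, hxa, haU⟩ := ihU x hxU
          obtain ⟨b, hxb, hbV⟩ := ihV x hxV
          refine ⟨a ⊔ b, ?_, ?_⟩
          · rw [sharp_sup]; exact fun h => h.elim hxa hxb
          · rw [sharp_sup]
            intro y hy
            rw [Set.compl_union] at hy
            exact ⟨haU hy.1, hbV hy.2⟩
        | sUnion S hS ih =>
          rintro x ⟨U, hU, hxU⟩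
          obtain ⟨a, hxa, haU⟩ := ih U hU x hxU
          exact ⟨a, hxa, haU.trans (Set.subset_sUnion_of_mem hU)⟩
      obtain ⟨a, hxa, haC⟩ := key Cᶜ hopen M hMC
      have hCa : C ⊆ sharp a := by
        intro y hy
        by_contra hya
        exact (haC hya) hy
      simp only [Set.mem_iInter] at hM
      exact hxa (hM a hCa)
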